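/- Let M > 1 and let p, q be probability mass functions on a finite set V with p(x)/q(x) ∈ [1/M, M] for all x (both strictly positive). Then the Kullback–Leibler divergence satisfies D_KL(p‖q) ≤ (log M)·(M/(M−1))·TV(p,q), where TV(p,q) = (1/2)·Σ_x |p(x) − q(x)| is the total variation distance. -/

import Mathlib

open Finset

/-- Kullback–Leibler divergence (natural log) between pmfs on a finite set. -/
noncomputable def KL {V : Type*} [Fintype V] (p q : V → ℝ) : ℝ :=
  ∑ x, p x * Real.log (p x / q x)

/-- Total variation distance between pmfs on a finite set. -/
noncomputable def TV {V : Type*} [Fintype V] (p q : V → ℝ) : ℝ :=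
  (1 / 2) * ∑ x, |p x - q x|

lemma mul_log_chord (M : ℝ) (hM : 1 < M) (t : ℝ) (ht1 : 1 ≤ t) (htM : t ≤ M) :
    t * Real.log t ≤ Real.log M * (M / (M - 1)) * (t - 1) := by
  have hM1 : (0:ℝ) < M - 1 := by linarith
  have ha : 0 ≤ (M - t) / (M - 1) := div_nonneg (by linarith) hM1.le
  have hb : 0 ≤ (t - 1) / (M - 1) := div_nonneg (by linarith) hM1.le
  have hab : (M - t) / (M - 1) + (t - 1) / (M - 1) = 1 := by field_simp; ring
  have h := Real.convexOn_mul_log.2 (Set.mem_Ici.2 (by norm_num : (0:ℝ) ≤ 1))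
    (Set.mem_Ici.2 (by linarith : (0:ℝ) ≤ M)) ha hb hab
  simp only [smul_eq_mul] at h
  have hcomb : (M - t) / (M - 1) * (1:ℝ) + (t - 1) / (M - 1) * M = t := by
    field_simp
    ring
  rw [hcomb] at h
  simp only [Real.log_one, mul_one, mul_zero, zero_add] at h
  calc t * Real.log t ≤ (t - 1) / (M - 1) * (M * Real.log M) := h
    _ = Real.log M * (M / (M - 1)) * (t - 1) := by ring

/-- If `p x / q x ∈ [1/M, M]` for all `x` (both strictly positive), then
`D_KL(p‖q) ≤ (log M)·(M/(M−1))·TV(p,q)`. -/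
theorem KL_le_TV_bound {V : Type*} [Fintype V] (M : ℝ) (hM : 1 < M)
    (p q : V → ℝ) (hp0 : ∀ x, 0 < p x) (hq0 : ∀ x, 0 < q x)
    (hp1 : ∑ x, p x = 1) (hq1 : ∑ x, q x = 1)
    (hratio : ∀ x, 1 / M ≤ p x / q x ∧ p x / q x ≤ M) :
    KL p q ≤ Real.log M * (M / (M - 1)) * TV p q := by
  classical
  set C := Real.log M * (M / (M - 1)) with hC
  set A : Finset V := Finset.univ.filter (fun x => q x ≤ p x) with hA
  -- pointwise bound on A
  have key : ∀ x ∈ A, p x * Real.log (p x / q x) ≤ C * (p x - q x) := by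
    intro x hx
    have hqx := hq0 x
    have hxq : q x ≤ p x := (Finset.mem_filter.1 hx).2
    have ht1 : 1 ≤ p x / q x := (one_le_div hqx).2 hxq
    have htM : p x / q x ≤ M := (hratio x).2
    have h := mul_log_chord M hM (p x / q x) ht1 htM
    have h2 : q x * (p x / q x * Real.log (p x / q x)) ≤
        q x * (C * (p x / q x - 1)) := by
      exact mul_le_mul_of_nonneg_left h hqx.le
    calc p x * Real.log (p x / q x)
        = q x * (p x / q x * Real.log (p x / q x)) := by
          field_simp
      _ ≤ q x * (C * (p x / q x - 1)) := h2
      _ = C * (p x - q x) := by field_simp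
  -- terms off A are nonpositive
  have hneg : ∀ x ∈ Aᶜ, p x * Real.log (p x / q x) ≤ 0 := by
    intro x hx
    have hxq : p x < q x := by
      have := Finset.mem_compl.1 hx
      simp only [hA, Finset.mem_filter, Finset.mem_univ, true_and, not_le] at this
      exact this
    have hlog : Real.log (p x / q x) ≤ 0 := by
      apply Real.log_nonpos (div_pos (hp0 x) (hq0 x)).le
      rw [div_le_one (hq0 x)]; exact hxq.le
    exact mul_nonpos_of_nonneg_of_nonpos (hp0 x).le hlog
  -- sum over A of (p - q) equals TV
  have habs : ∀ x, |p x - q x| = (if x ∈ A then (1:ℝ) else -1) * (p x - q x) := by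
    intro x
    by_cases h : x ∈ A
    · simp only [h, if_true, one_mul]
      exact abs_of_nonneg (sub_nonneg.2 (Finset.mem_filter.1 h).2)
    · have : p x < q x := by
        simp only [hA, Finset.mem_filter, Finset.mem_univ, true_and, not_le] at h
        exact h
      simp only [h, if_false]
      rw [abs_of_neg (by linarith)]; ring
  have hsum0 : ∑ x, (p x - q x) = 0 := by
    rw [Finset.sum_sub_distrib, hp1, hq1]; ring
  have hTV : TV p q = ∑ x ∈ A, (p x - q x) := by
    have hsplit : ∑ x, (p x - q x) = ∑ x ∈ A, (p x - q x) + ∑ x ∈ Aᶜ, (p x - q x) :=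
      (Finset.sum_add_sum_compl A _).symm
    have hc : ∑ x ∈ Aᶜ, (p x - q x) = -∑ x ∈ A, (p x - q x) := by
      rw [hsplit] at hsum0; linarith
    have habs' : ∑ x, |p x - q x| =
        ∑ x ∈ A, (p x - q x) + ∑ x ∈ Aᶜ, -(p x - q x) := by
      rw [← Finset.sum_add_sum_compl A (fun x => |p x - q x|)]
      congr 1
      · apply Finset.sum_congr rfl; intro x hx
        rw [habs x]; simp [hx]
      · apply Finset.sum_congr rfl; intro x hx
        rw [habs x]; simp [Finset.mem_compl.1 hx]
    rw [TV, habs', Finset.sum_neg_distrib, hc]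
    ring
  -- put it together
  have hCnn : 0 ≤ C :=
    mul_nonneg (Real.log_nonneg hM.le) (div_nonneg (by linarith) (by linarith))
  calc KL p q = ∑ x ∈ A, p x * Real.log (p x / q x)
        + ∑ x ∈ Aᶜ, p x * Real.log (p x / q x) :=
        (Finset.sum_add_sum_compl A _).symm
    _ ≤ ∑ x ∈ A, C * (p x - q x) + 0 :=
        add_le_add (Finset.sum_le_sum key) (Finset.sum_nonpos hneg)
    _ = C * ∑ x ∈ A, (p x - q x) := by rw [Finset.mul_sum]; ring
    _ = C * TV p q := by rw [hTV]
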